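/- Let p be an odd prime, n ≥ 1 an odd integer, and α a p-adic integer with α ≡ 2a (mod p) for some integer a with 1 ≤ a ≤ (p-1)/2. Then ∑_{k=0}^{p-1} ((α)_k / k!)^{np} ≡ 0 (mod p²) in ℤ_p. -/

import Mathlib

open Finset

lemma wilson_pair (p : ℕ) [hp : Fact p.Prime] : ∀ j, j ≤ p - 1 →
    ((j.factorial : ZMod p) * ((p - 1 - j).factorial : ZMod p)) = (-1) ^ (j + 1) := by
  intro j
  induction j with
  | zero => intro _; simp [ZMod.wilsons_lemma]
  | succ j ih =>
    intro hj
    have hp2 := hp.out.two_le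
    have ih' := ih (by omega)
    have h1 : p - 1 - j = (p - 1 - (j + 1)) + 1 := by omega
    have h2 : ((p - 1 - j : ℕ) : ZMod p) = -((j : ZMod p) + 1) := by
      have hs : (p - 1 - j) + (j + 1) = p := by omega
      have h3 : (((p - 1 - j) + (j + 1) : ℕ) : ZMod p) = 0 := by
        rw [hs]; exact ZMod.natCast_self p
      push_cast at h3
      linear_combination h3
    rw [h1, Nat.factorial_succ] at ih'
    rw [h1] at h2
    push_cast at ih' h2
    rw [Nat.factorial_succ]
    push_cast
    rw [pow_succ]
    linear_combination (-1 : ZMod p) * ih' + ((j.factorial : ZMod p) * ((p - 1 - (j+1)).factorial : ZMod p)) * h2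

lemma key_zmod (p : ℕ) [hp : Fact p.Prime] (hodd : Odd p) (a : ℕ) (ha1 : 1 ≤ a)
    (ha2 : 2 * a ≤ p - 1) (k : ℕ) (hk : k ≤ p - 2 * a) :
    (((p - 2 * a - k).factorial * (2 * a).ascFactorial k
      + k.factorial * (2 * a).ascFactorial (p - 2 * a - k) : ℕ) : ZMod p) = 0 := by
  have hp2 := hp.out.two_le
  set b := 2 * a with hb
  set m := p - b with hm
  have hb1 : 1 ≤ b := by omega
  have hbm : b + m = p := by omega
  -- (b-1)! is nonzero mod p
  have hne : ((b - 1).factorial : ZMod p) ≠ 0 := by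
    rw [Ne, ZMod.natCast_eq_zero_iff]
    intro h
    have := (Nat.Prime.dvd_factorial hp.out).mp h
    omega
  have key : ((b - 1).factorial : ZMod p) *
      (((m - k).factorial * b.ascFactorial k
        + k.factorial * b.ascFactorial (m - k) : ℕ) : ZMod p) = 0 := by
    push_cast
    have e1 : (b - 1).factorial * b.ascFactorial k = (b + k - 1).factorial :=
      Nat.factorial_mul_ascFactorial' b k (by omega)
    have e2 : (b - 1).factorial * b.ascFactorial (m - k) = (b + (m - k) - 1).factorial :=
      Nat.factorial_mul_ascFactorial' b (m - k) (by omega)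
    have e3 : b + k - 1 = p - 1 - (m - k) := by omega
    have e4 : b + (m - k) - 1 = p - 1 - k := by omega
    rw [e3] at e1
    rw [e4] at e2
    have w1 := wilson_pair p (m - k) (by omega)
    have w2 := wilson_pair p k (by omega)
    have hmk : Odd (m - k + 1 + (k + 1)) := by
      have : m - k + 1 + (k + 1) = m + 2 := by omega
      rw [this]
      rcases hodd with ⟨t, ht⟩
      exact ⟨t - a + 1, by omega⟩
    -- (-1)^(m-k+1) + (-1)^(k+1) = 0
    have hsign : ((-1 : ZMod p)) ^ (m - k + 1) + (-1 : ZMod p) ^ (k + 1) = 0 := by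
      rcases Nat.even_or_odd (k + 1) with he | ho
      · have : Odd (m - k + 1) := by
          rcases hmk with ⟨t, ht⟩
          rcases he with ⟨s, hs⟩
          exact ⟨t - s, by omega⟩
        rw [this.neg_one_pow, he.neg_one_pow]; ring
      · have : Even (m - k + 1) := by
          rcases hmk with ⟨t, ht⟩
          rcases ho with ⟨s, hs⟩
          exact ⟨t - s, by omega⟩
        rw [this.neg_one_pow, ho.neg_one_pow]; ring
    calc ((b - 1).factorial : ZMod p) *
        ((m - k).factorial * (b.ascFactorial k : ℕ) + k.factorial * (b.ascFactorial (m - k) : ℕ))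
        = ((m - k).factorial : ZMod p) * (((b-1).factorial * b.ascFactorial k : ℕ) : ZMod p)
          + (k.factorial : ZMod p) * (((b-1).factorial * b.ascFactorial (m-k) : ℕ) : ZMod p) := by
          push_cast; ring
      _ = ((m - k).factorial : ZMod p) * ((p - 1 - (m - k)).factorial : ZMod p)
          + (k.factorial : ZMod p) * ((p - 1 - k).factorial : ZMod p) := by rw [e1, e2]
      _ = (-1) ^ (m - k + 1) + (-1) ^ (k + 1) := by rw [w1, w2]
      _ = 0 := hsign
  exact (mul_eq_zero.mp key).resolve_left hne

lemma ascPochhammer_eval_prod (R : Type*) [CommRing R] (x : R) :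
    ∀ k : ℕ, (ascPochhammer R k).eval x = ∏ i ∈ range k, (x + i)
  | 0 => by simp
  | k + 1 => by
    rw [ascPochhammer_succ_right, Polynomial.eval_mul, ascPochhammer_eval_prod R x k,
      prod_range_succ]
    simp

variable {p : ℕ} [hp : Fact p.Prime]

lemma norm_nat_le_one (k : ℕ) : ‖(k : ℚ_[p])‖ ≤ 1 := by
  have := Padic.norm_int_le_one (p := p) k
  push_cast at this
  exact this

lemma norm_nat_le_inv_of_dvd {k : ℕ} (h : p ∣ k) : ‖(k : ℚ_[p])‖ ≤ (p : ℝ)⁻¹ := by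
  have := (Padic.norm_int_le_pow_iff_dvd (p := p) k 1).mpr (by exact_mod_cast pow_one p ▸ Int.natCast_dvd_natCast.mpr h)
  push_cast at this
  simpa using this

lemma norm_factorial_eq_one {k : ℕ} (hk : k < p) : ‖(k.factorial : ℚ_[p])‖ = 1 := by
  refine le_antisymm (norm_nat_le_one _) ?_
  by_contra h
  push_neg at h
  have hlt : ‖((k.factorial : ℤ) : ℚ_[p])‖ < 1 := by push_cast; linarith
  rw [Padic.norm_intCast_lt_one_iff] at hlt
  have : p ∣ k.factorial := by exact_mod_cast hlt
  exact absurd ((Nat.Prime.dvd_factorial hp.out).mp this) (by omega)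

lemma prod_norm_le_one {k : ℕ} {f : ℕ → ℚ_[p]} (hf : ∀ i < k, ‖f i‖ ≤ 1) :
    ‖∏ i ∈ range k, f i‖ ≤ 1 := by
  rw [norm_prod]
  exact Finset.prod_le_one (fun i _ => norm_nonneg _) (fun i hi => hf i (mem_range.mp hi))

lemma prod_congr_norm {k : ℕ} {x y : ℕ → ℚ_[p]} {ε : ℝ} (hε : 0 ≤ ε)
    (hx : ∀ i < k, ‖x i‖ ≤ 1) (hy : ∀ i < k, ‖y i‖ ≤ 1)
    (hxy : ∀ i < k, ‖x i - y i‖ ≤ ε) :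
    ‖∏ i ∈ range k, x i - ∏ i ∈ range k, y i‖ ≤ ε := by
  induction k with
  | zero => simpa using hε
  | succ k ih =>
    have ih' := ih (fun i hi => hx i (by omega)) (fun i hi => hy i (by omega))
      (fun i hi => hxy i (by omega))
    rw [prod_range_succ, prod_range_succ]
    have heq : (∏ i ∈ range k, x i) * x k - (∏ i ∈ range k, y i) * y k
        = x k * ((∏ i ∈ range k, x i) - (∏ i ∈ range k, y i))
          + (x k - y k) * ∏ i ∈ range k, y i := by ring
    rw [heq]
    refine le_trans (Padic.nonarchimedean _ _) (max_le ?_ ?_)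
    · rw [norm_mul]
      calc ‖x k‖ * ‖(∏ i ∈ range k, x i) - (∏ i ∈ range k, y i)‖
          ≤ 1 * ε := mul_le_mul (hx k (by omega)) ih' (norm_nonneg _) zero_le_one
        _ = ε := one_mul ε
    · rw [norm_mul]
      calc ‖x k - y k‖ * ‖∏ i ∈ range k, y i‖
          ≤ ε * 1 := mul_le_mul (hxy k (by omega))
            (prod_norm_le_one (fun i hi => hy i (by omega))) (norm_nonneg _) hε
        _ = ε := mul_one ε

lemma inv_sq_eq : ((p : ℝ))^(-2 : ℤ) = (p : ℝ)⁻¹ * (p : ℝ)⁻¹ := by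
  have hp0 : (0:ℝ) < p := by exact_mod_cast hp.out.pos
  rw [show (-2 : ℤ) = -(1+1) by norm_num, zpow_neg]
  rw [zpow_add₀ (ne_of_gt hp0), zpow_one, mul_inv]

lemma pow_pair_bound {x y : ℚ_[p]} {N : ℕ} (hN : Odd N) (hpN : p ∣ N)
    (hx : ‖x‖ ≤ 1) (hy : ‖y‖ ≤ 1) (hxy : ‖x + y‖ ≤ (p : ℝ)⁻¹) :
    ‖x ^ N + y ^ N‖ ≤ (p : ℝ) ^ (-2 : ℤ) := by
  have hp0 : (0:ℝ) < p := by exact_mod_cast hp.out.pos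
  have hpinv : (p : ℝ)⁻¹ ≤ 1 := by
    rw [inv_le_one_iff₀]; right; exact_mod_cast hp.out.one_lt.le
  have hexp := add_pow (x + y) (-x) N
  rw [show x + y + -x = y by ring, Finset.sum_range_succ'] at hexp
  have h0 : (x + y) ^ 0 * (-x) ^ (N - 0) * (N.choose 0 : ℚ_[p]) = -x ^ N := by
    simp [hN.neg_pow]
  rw [h0] at hexp
  have key : x ^ N + y ^ N
      = ∑ j ∈ range N, (x + y) ^ (j + 1) * (-x) ^ (N - (j + 1)) * (N.choose (j + 1) : ℚ_[p]) := by
    rw [hexp]; ring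
  rw [key]
  refine IsUltrametricDist.norm_sum_le_of_forall_le_of_nonneg
    (zpow_nonneg (le_of_lt hp0) _) ?_
  intro j hj
  rw [norm_mul, norm_mul, norm_pow, norm_pow, norm_neg, inv_sq_eq]
  rcases Nat.eq_zero_or_pos j with rfl | hj1
  · -- term j = 0 : (x+y)^1 * x^(N-1) * N
    have hN1 : ‖(N.choose 1 : ℚ_[p])‖ ≤ (p : ℝ)⁻¹ := by
      rw [Nat.choose_one_right]
      exact norm_nat_le_inv_of_dvd hpN
    calc ‖x + y‖ ^ 1 * ‖x‖ ^ (N - 1) * ‖(N.choose 1 : ℚ_[p])‖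
        ≤ (p : ℝ)⁻¹ * 1 * (p : ℝ)⁻¹ := by
          refine mul_le_mul (mul_le_mul (by simpa using hxy)
            (pow_le_one₀ (norm_nonneg _) hx) (by positivity) (by positivity)) hN1
            (norm_nonneg _) (by positivity)
      _ = (p : ℝ)⁻¹ * (p : ℝ)⁻¹ := by ring
  · -- term j ≥ 1 : ‖x+y‖^(j+1) ≤ (1/p)^2
    calc ‖x + y‖ ^ (j + 1) * ‖x‖ ^ (N - (j + 1)) * ‖(N.choose (j + 1) : ℚ_[p])‖
        ≤ ((p : ℝ)⁻¹ * (p : ℝ)⁻¹) * 1 * 1 := by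
          refine mul_le_mul (mul_le_mul ?_ (pow_le_one₀ (norm_nonneg _) hx)
            (by positivity) (by positivity)) (norm_nat_le_one _) (norm_nonneg _) (by positivity)
          calc ‖x + y‖ ^ (j + 1) ≤ ((p:ℝ)⁻¹) ^ (j + 1) :=
                pow_le_pow_left₀ (norm_nonneg _) hxy _
            _ ≤ ((p:ℝ)⁻¹) ^ 2 := by
                refine pow_le_pow_of_le_one (by positivity) hpinv (by omega)
            _ = (p : ℝ)⁻¹ * (p : ℝ)⁻¹ := sq _
      _ = (p : ℝ)⁻¹ * (p : ℝ)⁻¹ := by ring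

theorem truncated_npFnp_divisibility (p : ℕ) [Fact p.Prime] (hp : Odd p)
    (n : ℕ) (hn1 : 1 ≤ n) (hn2 : Odd n) (α : ℤ_[p]) (a : ℕ) (ha1 : 1 ≤ a)
    (ha2 : 2 * a ≤ p - 1) (hα : (p : ℤ_[p]) ∣ (α - 2 * a)) :
    ‖∑ k ∈ Finset.range p,
        ((ascPochhammer ℚ_[p] k).eval (α : ℚ_[p]) / (k.factorial : ℚ_[p])) ^ (n * p)‖
      ≤ (p : ℝ) ^ (-2 : ℤ) := by
  classical
  have hprime : p.Prime := Fact.out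
  have hp3 : 3 ≤ p := by
    rcases hp with ⟨t, ht⟩
    have := hprime.two_le
    omega
  have hp0 : (0:ℝ) < p := by exact_mod_cast hprime.pos
  have hne2 : (0:ℝ) ≤ (p : ℝ) ^ (-2 : ℤ) := zpow_nonneg (le_of_lt hp0) _
  obtain ⟨β, hβ⟩ := hα
  set m := p - 2 * a with hm
  set N := n * p with hNdef
  set A : ℚ_[p] := (α : ℚ_[p]) with hA
  set c : ℕ → ℚ_[p] :=
    fun k => (ascPochhammer ℚ_[p] k).eval A / (k.factorial : ℚ_[p]) with hc
  -- basic facts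
  have hAi : ∀ i : ℕ, ‖A + i‖ ≤ 1 := by
    intro i
    have h1 : A + (i : ℚ_[p]) = ((α + i : ℤ_[p]) : ℚ_[p]) := by push_cast; ring
    rw [h1, PadicInt.padic_norm_e_of_padicInt]
    exact PadicInt.norm_le_one _
  have hPeq : ∀ k, (ascPochhammer ℚ_[p] k).eval A = ∏ i ∈ Finset.range k, (A + i) :=
    fun k => ascPochhammer_eval_prod ℚ_[p] A k
  have hPnorm : ∀ k, ‖(ascPochhammer ℚ_[p] k).eval A‖ ≤ 1 := by
    intro k; rw [hPeq k]
    exact prod_norm_le_one (fun i _ => hAi i)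
  have hdiff : ‖A - ((2 * a : ℕ) : ℚ_[p])‖ ≤ (p : ℝ)⁻¹ := by
    have h1 : A - ((2 * a : ℕ) : ℚ_[p]) = ((α - 2 * a : ℤ_[p]) : ℚ_[p]) := by
      push_cast; norm_cast
    rw [h1, hβ]
    push_cast
    rw [norm_mul, Padic.norm_p, PadicInt.padic_norm_e_of_padicInt]
    calc (p:ℝ)⁻¹ * ‖β‖ ≤ (p:ℝ)⁻¹ * 1 :=
          mul_le_mul_of_nonneg_left (PadicInt.norm_le_one β) (by positivity)
      _ = (p:ℝ)⁻¹ := mul_one _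
  have hcnorm : ∀ k < p, ‖c k‖ = ‖(ascPochhammer ℚ_[p] k).eval A‖ := by
    intro k hk
    rw [hc]
    simp only []
    rw [norm_div, norm_factorial_eq_one hk, div_one]
  have hcle1 : ∀ k < p, ‖c k‖ ≤ 1 := fun k hk => (hcnorm k hk).le.trans (hPnorm k)
  -- bound for k > m
  have htail : ∀ k, m < k → k < p → ‖c k‖ ≤ (p : ℝ)⁻¹ := by
    intro k hmk hkp
    rw [hcnorm k hkp, hPeq k]
    have hmem : m ∈ Finset.range k := Finset.mem_range.mpr hmk
    rw [← Finset.mul_prod_erase _ _ hmem, norm_mul]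
    have hfac : ‖A + (m : ℚ_[p])‖ ≤ (p:ℝ)⁻¹ := by
      have h1 : A + ((m : ℕ) : ℚ_[p]) = (A - ((2 * a : ℕ) : ℚ_[p])) + (p : ℚ_[p]) := by
        have : ((m : ℕ) : ℚ_[p]) = (p : ℚ_[p]) - ((2 * a : ℕ) : ℚ_[p]) := by
          rw [hm]
          have h2 : 2 * a ≤ p := by omega
          push_cast [Nat.cast_sub h2]
          ring
        rw [this]; ring
      rw [h1]
      refine le_trans (Padic.nonarchimedean _ _) (max_le hdiff ?_)
      rw [Padic.norm_p]
    have hrest : ‖∏ i ∈ (Finset.range k).erase m, (A + i)‖ ≤ 1 := by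
      rw [norm_prod]
      exact Finset.prod_le_one (fun i _ => norm_nonneg _) (fun i _ => hAi i)
    calc ‖A + (m : ℚ_[p])‖ * ‖∏ i ∈ (Finset.range k).erase m, (A + i)‖
        ≤ (p:ℝ)⁻¹ * 1 := mul_le_mul hfac hrest (norm_nonneg _) (by positivity)
      _ = (p:ℝ)⁻¹ := mul_one _
  -- the pairing bound
  have hPnat : ∀ j : ℕ, (((2 * a).ascFactorial j : ℕ) : ℚ_[p])
      = ∏ i ∈ Finset.range j, (((2 * a : ℕ) : ℚ_[p]) + i) := by
    intro j
    rw [← ascPochhammer_nat_eq_ascFactorial, ascPochhammer_eval_cast,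
      ascPochhammer_eval_prod]
  have hPdiff : ∀ j : ℕ, ‖(ascPochhammer ℚ_[p] j).eval A - (((2 * a).ascFactorial j : ℕ) : ℚ_[p])‖
      ≤ (p:ℝ)⁻¹ := by
    intro j
    rw [hPeq j, hPnat j]
    refine prod_congr_norm (by positivity) (fun i _ => hAi i) (fun i _ => ?_) (fun i _ => ?_)
    · have : (((2 * a : ℕ) : ℚ_[p]) + i) = (((2 * a + i : ℕ)) : ℚ_[p]) := by push_cast; ring
      rw [this]; exact norm_nat_le_one _
    · have : A + (i:ℚ_[p]) - (((2 * a : ℕ) : ℚ_[p]) + i) = A - ((2 * a : ℕ) : ℚ_[p]) := by ring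
      rw [this]; exact hdiff
  have hpair : ∀ k ≤ m, ‖c k + c (m - k)‖ ≤ (p:ℝ)⁻¹ := by
    intro k hk
    have hkp : k < p := by omega
    have hmkp : m - k < p := by omega
    have hFk : (k.factorial : ℚ_[p]) ≠ 0 := by
      exact_mod_cast Nat.cast_ne_zero.mpr k.factorial_ne_zero
    have hFmk : ((m - k).factorial : ℚ_[p]) ≠ 0 := by
      exact_mod_cast Nat.cast_ne_zero.mpr (m - k).factorial_ne_zero
    have hsum : c k + c (m - k)
        = ((ascPochhammer ℚ_[p] k).eval A * ((m - k).factorial : ℚ_[p])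
            + (ascPochhammer ℚ_[p] (m - k)).eval A * (k.factorial : ℚ_[p]))
          / ((k.factorial : ℚ_[p]) * ((m - k).factorial : ℚ_[p])) := by
      rw [hc]
      rw [div_add_div _ _ hFk hFmk]
      ring
    rw [hsum, norm_div, norm_mul, norm_factorial_eq_one hkp, norm_factorial_eq_one hmkp]
    rw [mul_one, div_one]
    -- numerator bound
    set Pk := (ascPochhammer ℚ_[p] k).eval A
    set Pmk := (ascPochhammer ℚ_[p] (m - k)).eval A
    set Qk := (((2 * a).ascFactorial k : ℕ) : ℚ_[p])
    set Qmk := (((2 * a).ascFactorial (m - k) : ℕ) : ℚ_[p])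
    have hnum0 : ‖Qk * ((m - k).factorial : ℚ_[p]) + Qmk * (k.factorial : ℚ_[p])‖ ≤ (p:ℝ)⁻¹ := by
      have heqnat : Qk * ((m - k).factorial : ℚ_[p]) + Qmk * (k.factorial : ℚ_[p])
          = (((m - k).factorial * (2 * a).ascFactorial k
              + k.factorial * (2 * a).ascFactorial (m - k) : ℕ) : ℚ_[p]) := by
        push_cast; ring
      rw [heqnat]
      refine norm_nat_le_inv_of_dvd ?_
      rw [← ZMod.natCast_eq_zero_iff]
      exact key_zmod p hp a ha1 ha2 k hk
    have hnum1 : ‖(Pk * ((m - k).factorial : ℚ_[p]) + Pmk * (k.factorial : ℚ_[p]))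
        - (Qk * ((m - k).factorial : ℚ_[p]) + Qmk * (k.factorial : ℚ_[p]))‖ ≤ (p:ℝ)⁻¹ := by
      have heq2 : (Pk * ((m - k).factorial : ℚ_[p]) + Pmk * (k.factorial : ℚ_[p]))
          - (Qk * ((m - k).factorial : ℚ_[p]) + Qmk * (k.factorial : ℚ_[p]))
          = (Pk - Qk) * ((m - k).factorial : ℚ_[p]) + (Pmk - Qmk) * (k.factorial : ℚ_[p]) := by
        ring
      rw [heq2]
      refine le_trans (Padic.nonarchimedean _ _) (max_le ?_ ?_)
      · rw [norm_mul, norm_factorial_eq_one hmkp, mul_one]; exact hPdiff k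
      · rw [norm_mul, norm_factorial_eq_one hkp, mul_one]; exact hPdiff (m - k)
    calc ‖Pk * ((m - k).factorial : ℚ_[p]) + Pmk * (k.factorial : ℚ_[p])‖
        = ‖((Pk * ((m - k).factorial : ℚ_[p]) + Pmk * (k.factorial : ℚ_[p]))
            - (Qk * ((m - k).factorial : ℚ_[p]) + Qmk * (k.factorial : ℚ_[p])))
          + (Qk * ((m - k).factorial : ℚ_[p]) + Qmk * (k.factorial : ℚ_[p]))‖ := by ring_nf
      _ ≤ (p:ℝ)⁻¹ := le_trans (Padic.nonarchimedean _ _) (max_le hnum1 hnum0)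
  -- now assemble
  have hNodd : Odd N := hn2.mul hp
  have hpN : p ∣ N := dvd_mul_left p n
  have hN2 : 2 ≤ N := by
    have : p ≤ N := Nat.le_mul_of_pos_left p hn1
    omega
  have hm1p : m + 1 ≤ p := by omega
  have hsplit : ∑ k ∈ Finset.range p, c k ^ N
      = (∑ k ∈ Finset.range (m + 1), c k ^ N) + ∑ k ∈ Finset.Ico (m + 1) p, c k ^ N := by
    rw [Finset.range_eq_Ico, Finset.range_eq_Ico]
    exact (Finset.sum_Ico_consecutive (f := fun k => c k ^ N) (Nat.zero_le _) hm1p).symm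
  have htailsum : ‖∑ k ∈ Finset.Ico (m + 1) p, c k ^ N‖ ≤ (p : ℝ) ^ (-2 : ℤ) := by
    refine IsUltrametricDist.norm_sum_le_of_forall_le_of_nonneg hne2 ?_
    intro k hk
    rw [Finset.mem_Ico] at hk
    rw [norm_pow]
    have h1 := htail k (by omega) hk.2
    have hpinv1 : (p:ℝ)⁻¹ ≤ 1 := by
      rw [inv_le_one_iff₀]; right; exact_mod_cast hprime.one_lt.le
    calc ‖c k‖ ^ N ≤ ((p:ℝ)⁻¹) ^ N := pow_le_pow_left₀ (norm_nonneg _) h1 _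
      _ ≤ ((p:ℝ)⁻¹) ^ 2 := pow_le_pow_of_le_one (by positivity) hpinv1 hN2
      _ = (p : ℝ) ^ (-2 : ℤ) := by rw [inv_sq_eq]; rw [sq]
  have hheadsum : ‖∑ k ∈ Finset.range (m + 1), c k ^ N‖ ≤ (p : ℝ) ^ (-2 : ℤ) := by
    have hrefl : ∑ k ∈ Finset.range (m + 1), c (m - k) ^ N
        = ∑ k ∈ Finset.range (m + 1), c k ^ N := by
      have := Finset.sum_range_reflect (fun k => c k ^ N) (m + 1)
      simpa using this
    have h2S : (2 : ℚ_[p]) * ∑ k ∈ Finset.range (m + 1), c k ^ N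
        = ∑ k ∈ Finset.range (m + 1), (c k ^ N + c (m - k) ^ N) := by
      rw [Finset.sum_add_distrib, hrefl, two_mul]
    have hbound : ‖(2 : ℚ_[p]) * ∑ k ∈ Finset.range (m + 1), c k ^ N‖ ≤ (p : ℝ) ^ (-2 : ℤ) := by
      rw [h2S]
      refine IsUltrametricDist.norm_sum_le_of_forall_le_of_nonneg hne2 ?_
      intro k hk
      rw [Finset.mem_range] at hk
      have hk' : k ≤ m := by omega
      exact pow_pair_bound hNodd hpN (hcle1 k (by omega)) (hcle1 (m - k) (by omega))
        (hpair k hk')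
    have h2norm : ‖(2 : ℚ_[p])‖ = 1 := by
      have h2f := norm_factorial_eq_one (p := p) (k := 2) (by omega)
      simpa [Nat.factorial] using h2f
    rwa [norm_mul, h2norm, one_mul] at hbound
  rw [hsplit]
  exact le_trans (Padic.nonarchimedean _ _) (max_le hheadsum htailsum)
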